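/- Let n ≥ 3 be odd and let M be the (n+1)×(n+1) matrix over ℚ with rows and columns indexed by {1,…,n+1} defined by: for k, j ≤ n−1, M_{kj} = 2 if k and j are both odd and M_{kj} = 0 otherwise; for k ≤ n−1, M_{k,n} = M_{k,n+1} = M_{n,k} = M_{n+1,k} = 1 if k is odd and 0 if k is even; M_{n,n} = M_{n+1,n+1} = (n+1)/2; and M_{n,n+1} = M_{n+1,n} = −(n−1)/2. Then the kernel {v ∈ ℚ^{n+1} : M·v = 0} is exactly the span of the vectors e_j − e_1 for odd j with 3 ≤ j ≤ n−2, the vectors e_j for even j with 2 ≤ j ≤ n−1, and the vector e_n + e_{n+1} − e_1; in particular this kernel has dimension n−1. -/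

import Mathlib

/-- The `j`-th standard basis vector of `ℚ^{n+1}` (with `1`-indexed label `j`, realized
on `Fin (n+1)` via `k ↦ k+1`). -/
def stdVec (n j : ℕ) : Fin (n + 1) → ℚ := fun k => if (k : ℕ) + 1 = j then 1 else 0



/-- indices `k` with odd label `k+1 ≤ n-1` -/
def oddSet (n : ℕ) : Finset (Fin (n + 1)) :=
  Finset.univ.filter (fun k => ((k : ℕ) + 1) % 2 = 1 ∧ (k : ℕ) + 1 ≤ n - 1)

/-- sum of coordinates with odd label `≤ n-1` -/
def Sfun (n : ℕ) (v : Fin (n + 1) → ℚ) : ℚ := ∑ k ∈ oddSet n, v k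

def idx1 (n : ℕ) : Fin (n + 1) := ⟨n - 1, by omega⟩
def idx2 (n : ℕ) : Fin (n + 1) := ⟨n, by omega⟩

lemma idx1_val (n : ℕ) : ((idx1 n : Fin (n + 1)) : ℕ) = n - 1 := by simp [idx1]
lemma idx2_val (n : ℕ) : ((idx2 n : Fin (n + 1)) : ℕ) = n := by simp [idx2]

lemma stdVec_apply (n j : ℕ) (i : Fin (n + 1)) :
    stdVec n j i = if (i : ℕ) + 1 = j then 1 else 0 := rfl

lemma mem_oddSet {n : ℕ} {k : Fin (n + 1)} :
    k ∈ oddSet n ↔ ((k : ℕ) + 1) % 2 = 1 ∧ (k : ℕ) + 1 ≤ n - 1 := by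
  simp [oddSet]

def genSetA (n : ℕ) : Finset (Fin (n + 1)) :=
  Finset.univ.filter (fun k => ((k : ℕ) + 1) % 2 = 1 ∧ 3 ≤ (k : ℕ) + 1 ∧ (k : ℕ) + 1 ≤ n - 2)

def genSetB (n : ℕ) : Finset (Fin (n + 1)) :=
  Finset.univ.filter (fun k => ((k : ℕ) + 1) % 2 = 0 ∧ (k : ℕ) + 1 ≤ n - 1)

lemma mem_genSetA {n : ℕ} {k : Fin (n + 1)} :
    k ∈ genSetA n ↔ ((k : ℕ) + 1) % 2 = 1 ∧ 3 ≤ (k : ℕ) + 1 ∧ (k : ℕ) + 1 ≤ n - 2 := by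
  simp [genSetA]

lemma mem_genSetB {n : ℕ} {k : Fin (n + 1)} :
    k ∈ genSetB n ↔ ((k : ℕ) + 1) % 2 = 0 ∧ (k : ℕ) + 1 ≤ n - 1 := by
  simp [genSetB]

lemma zero_not_mem_genSetA (n : ℕ) : (0 : Fin (n + 1)) ∉ genSetA n := by
  simp [genSetA]

lemma oddSet_eq (n : ℕ) (hn : 3 ≤ n) (hn2 : n % 2 = 1) :
    oddSet n = insert (0 : Fin (n + 1)) (genSetA n) := by
  ext k
  simp only [mem_oddSet, Finset.mem_insert, mem_genSetA, Fin.ext_iff, Fin.val_zero]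
  omega

lemma Sfun_add (n : ℕ) (u w : Fin (n + 1) → ℚ) : Sfun n (u + w) = Sfun n u + Sfun n w := by
  simp [Sfun, Finset.sum_add_distrib]

lemma Sfun_sub (n : ℕ) (u w : Fin (n + 1) → ℚ) : Sfun n (u - w) = Sfun n u - Sfun n w := by
  simp [Sfun, Finset.sum_sub_distrib]

lemma Sfun_smul (n : ℕ) (c : ℚ) (v : Fin (n + 1) → ℚ) : Sfun n (c • v) = c * Sfun n v := by
  simp [Sfun, Finset.mul_sum]

lemma sum_stdVec (n : ℕ) (s : Finset (Fin (n + 1))) (v : Fin (n + 1) → ℚ) (i : Fin (n + 1)) :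
    ∑ k ∈ s, v k * stdVec n ((k : ℕ) + 1) i = if i ∈ s then v i else 0 := by
  rw [← Finset.sum_ite_eq' s i v]
  refine Finset.sum_congr rfl fun k _ => ?_
  by_cases h : k = i
  · subst h; simp [stdVec]
  · have hne : (i : ℕ) + 1 ≠ (k : ℕ) + 1 := fun hh => h (Fin.ext (by omega))
    simp only [stdVec_apply]
    rw [if_neg hne, if_neg h, mul_zero]

lemma Sfun_stdVec (n j : ℕ) (h1 : 1 ≤ j) (h2 : j ≤ n + 1) :
    Sfun n (stdVec n j) = if j % 2 = 1 ∧ j ≤ n - 1 then 1 else 0 := by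
  have hcong : ∀ k ∈ oddSet n,
      stdVec n j k = if k = (⟨j - 1, by omega⟩ : Fin (n + 1)) then 1 else 0 := by
    intro k _
    simp only [stdVec_apply]
    by_cases h : (k : ℕ) + 1 = j
    · rw [if_pos h, if_pos (Fin.ext (by simp; omega))]
    · rw [if_neg h, if_neg (fun hh => h (by rw [hh]; simp; omega))]
  rw [Sfun, Finset.sum_congr rfl hcong, Finset.sum_ite_eq']
  have hiff : (⟨j - 1, by omega⟩ : Fin (n + 1)) ∈ oddSet n ↔ (j % 2 = 1 ∧ j ≤ n - 1) := by
    rw [mem_oddSet]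
    simp only [Fin.val_mk]
    omega
  rw [if_congr hiff rfl rfl]

def Lmap (n : ℕ) : (Fin (n + 1) → ℚ) →ₗ[ℚ] ℚ × ℚ where
  toFun v := (Sfun n v + v (idx1 n), v (idx1 n) - v (idx2 n))
  map_add' u w := by
    simp only [Pi.add_apply, Sfun_add, Prod.mk_add_mk, Prod.mk.injEq]
    constructor <;> ring
  map_smul' c v := by
    simp only [Pi.smul_apply, Sfun_smul, smul_eq_mul, RingHom.id_apply, Prod.smul_mk,
      Prod.mk.injEq]
    constructor <;> ring

lemma Lmap_apply (n : ℕ) (v : Fin (n + 1) → ℚ) :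
    Lmap n v = (Sfun n v + v (idx1 n), v (idx1 n) - v (idx2 n)) := rfl

/-- For odd `n ≥ 3`, the matrix `M` (rows and columns indexed by `{1, …, n+1}`) with
`M k j = 2` if `k, j ≤ n−1` are both odd and `0` otherwise for `k, j ≤ n−1`;
`M k n = M k (n+1) = M n k = M (n+1) k = 1` for odd `k ≤ n−1` and `0` for even
`k ≤ n−1`; `M n n = M (n+1) (n+1) = (n+1)/2` and `M n (n+1) = M (n+1) n = −(n−1)/2`,
has kernel exactly the span of the `e_j − e₁` for odd `3 ≤ j ≤ n−2`, the `e_j` for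
even `2 ≤ j ≤ n−1`, and `eₙ + e_{n+1} − e₁`; in particular the kernel has
dimension `n − 1`. -/
theorem kernel_signed_matrix_Dn_odd
    (n : ℕ) (hn : 3 ≤ n) (hno : Odd n)
    (M : Matrix (Fin (n + 1)) (Fin (n + 1)) ℚ)
    (hM : ∀ i j : Fin (n + 1), M i j =
      if (i : ℕ) + 1 ≤ n - 1 ∧ (j : ℕ) + 1 ≤ n - 1 then
        (if Odd ((i : ℕ) + 1) ∧ Odd ((j : ℕ) + 1) then 2 else 0)
      else if (i : ℕ) + 1 ≤ n - 1 then (if Odd ((i : ℕ) + 1) then 1 else 0)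
      else if (j : ℕ) + 1 ≤ n - 1 then (if Odd ((j : ℕ) + 1) then 1 else 0)
      else if (i : ℕ) = (j : ℕ) then ((n : ℚ) + 1) / 2 else -(((n : ℚ) - 1) / 2)) :
    LinearMap.ker M.mulVecLin =
      Submodule.span ℚ
        ({v | ∃ j : ℕ, Odd j ∧ 3 ≤ j ∧ j ≤ n - 2 ∧ v = stdVec n j - stdVec n 1}
          ∪ {v | ∃ j : ℕ, Even j ∧ 2 ≤ j ∧ j ≤ n - 1 ∧ v = stdVec n j}
          ∪ {stdVec n n + stdVec n (n + 1) - stdVec n 1}) ∧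
    Module.finrank ℚ (LinearMap.ker M.mulVecLin) = n - 1 := by
  have hn2 : n % 2 = 1 := Nat.odd_iff.mp hno
  have hmv : ∀ (v : Fin (n + 1) → ℚ) (i : Fin (n + 1)),
      M.mulVec v i = ∑ k, M i k * v k := by
    intro v i; simp [Matrix.mulVec, dotProduct]
  -- pointwise row computations
  have hpt_odd : ∀ (v : Fin (n + 1) → ℚ) (i k : Fin (n + 1)),
      (i : ℕ) + 1 ≤ n - 1 → ((i : ℕ) + 1) % 2 = 1 →
      M i k * v k = (if k ∈ oddSet n then 2 * v k else 0)
        + ((if k = idx1 n then v k else 0) + (if k = idx2 n then v k else 0)) := by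
    intro v i k hle hod
    have hk := k.isLt
    have hi := i.isLt
    rw [hM]
    simp only [Nat.odd_iff, mem_oddSet, Fin.ext_iff, idx1_val, idx2_val]
    split_ifs <;> (first | ring1 | (exfalso; omega))
  have hpt_even : ∀ (v : Fin (n + 1) → ℚ) (i k : Fin (n + 1)),
      (i : ℕ) + 1 ≤ n - 1 → ((i : ℕ) + 1) % 2 = 0 →
      M i k * v k = 0 := by
    intro v i k hle hod
    have hk := k.isLt
    have hi := i.isLt
    rw [hM]
    simp only [Nat.odd_iff]
    split_ifs <;> (first | ring1 | (exfalso; omega))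
  have hpt1 : ∀ (v : Fin (n + 1) → ℚ) (k : Fin (n + 1)),
      M (idx1 n) k * v k = (if k ∈ oddSet n then v k else 0)
        + ((if k = idx1 n then ((n : ℚ) + 1) / 2 * v k else 0)
          + (if k = idx2 n then (-(((n : ℚ) - 1) / 2)) * v k else 0)) := by
    intro v k
    have hk := k.isLt
    rw [hM]
    simp only [Nat.odd_iff, mem_oddSet, Fin.ext_iff, idx1_val, idx2_val]
    split_ifs <;> (first | ring1 | (exfalso; omega))
  have hpt2 : ∀ (v : Fin (n + 1) → ℚ) (k : Fin (n + 1)),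
      M (idx2 n) k * v k = (if k ∈ oddSet n then v k else 0)
        + ((if k = idx1 n then (-(((n : ℚ) - 1) / 2)) * v k else 0)
          + (if k = idx2 n then ((n : ℚ) + 1) / 2 * v k else 0)) := by
    intro v k
    have hk := k.isLt
    rw [hM]
    simp only [Nat.odd_iff, mem_oddSet, Fin.ext_iff, idx1_val, idx2_val]
    split_ifs <;> (first | ring1 | (exfalso; omega))
  -- row sums
  have hrow_odd : ∀ (v : Fin (n + 1) → ℚ) (i : Fin (n + 1)),
      (i : ℕ) + 1 ≤ n - 1 → ((i : ℕ) + 1) % 2 = 1 →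
      M.mulVec v i = 2 * Sfun n v + (v (idx1 n) + v (idx2 n)) := by
    intro v i hle hod
    rw [hmv, Finset.sum_congr rfl (fun k _ => hpt_odd v i k hle hod),
      Finset.sum_add_distrib, Finset.sum_add_distrib,
      Finset.sum_ite_eq' _ (idx1 n) v, Finset.sum_ite_eq' _ (idx2 n) v,
      Finset.sum_ite_mem, Finset.univ_inter]
    simp [Sfun, Finset.mul_sum]
  have hrow_even : ∀ (v : Fin (n + 1) → ℚ) (i : Fin (n + 1)),
      (i : ℕ) + 1 ≤ n - 1 → ((i : ℕ) + 1) % 2 = 0 →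
      M.mulVec v i = 0 := by
    intro v i hle hod
    rw [hmv]
    exact Finset.sum_eq_zero fun k _ => hpt_even v i k hle hod
  have hrow1 : ∀ (v : Fin (n + 1) → ℚ),
      M.mulVec v (idx1 n) = Sfun n v
        + (((n : ℚ) + 1) / 2 * v (idx1 n) + (-(((n : ℚ) - 1) / 2)) * v (idx2 n)) := by
    intro v
    rw [hmv, Finset.sum_congr rfl (fun k _ => hpt1 v k),
      Finset.sum_add_distrib, Finset.sum_add_distrib,
      Finset.sum_ite_eq' _ (idx1 n) (fun k => ((n : ℚ) + 1) / 2 * v k),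
      Finset.sum_ite_eq' _ (idx2 n) (fun k => (-(((n : ℚ) - 1) / 2)) * v k),
      Finset.sum_ite_mem, Finset.univ_inter]
    simp [Sfun]
  have hrow2 : ∀ (v : Fin (n + 1) → ℚ),
      M.mulVec v (idx2 n) = Sfun n v
        + ((-(((n : ℚ) - 1) / 2)) * v (idx1 n) + ((n : ℚ) + 1) / 2 * v (idx2 n)) := by
    intro v
    rw [hmv, Finset.sum_congr rfl (fun k _ => hpt2 v k),
      Finset.sum_add_distrib, Finset.sum_add_distrib,
      Finset.sum_ite_eq' _ (idx1 n) (fun k => (-(((n : ℚ) - 1) / 2)) * v k),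
      Finset.sum_ite_eq' _ (idx2 n) (fun k => ((n : ℚ) + 1) / 2 * v k),
      Finset.sum_ite_mem, Finset.univ_inter]
    simp [Sfun]
  -- kernel characterization
  have hchar : ∀ v : Fin (n + 1) → ℚ,
      M.mulVec v = 0 ↔ (Sfun n v + v (idx1 n) = 0 ∧ v (idx1 n) = v (idx2 n)) := by
    intro v
    constructor
    · intro h
      have h1 : Sfun n v + (((n : ℚ) + 1) / 2 * v (idx1 n)
          + (-(((n : ℚ) - 1) / 2)) * v (idx2 n)) = 0 := by
        have := congrFun h (idx1 n); rwa [hrow1 v, Pi.zero_apply] at this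
      have h2 : Sfun n v + ((-(((n : ℚ) - 1) / 2)) * v (idx1 n)
          + ((n : ℚ) + 1) / 2 * v (idx2 n)) = 0 := by
        have := congrFun h (idx2 n); rwa [hrow2 v, Pi.zero_apply] at this
      have hne : (n : ℚ) ≠ 0 := Nat.cast_ne_zero.mpr (by omega)
      have h3 : (n : ℚ) * (v (idx1 n) - v (idx2 n)) = 0 := by linear_combination h1 - h2
      have hab : v (idx1 n) = v (idx2 n) :=
        sub_eq_zero.mp ((mul_eq_zero.mp h3).resolve_left hne)
      refine ⟨?_, hab⟩
      linear_combination (1/2 : ℚ) * h1 + (1/2 : ℚ) * h2 + (1/2 : ℚ) * hab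
    · rintro ⟨h1, h2⟩
      funext i
      have hi := i.isLt
      rw [Pi.zero_apply]
      by_cases hle : (i : ℕ) + 1 ≤ n - 1
      · by_cases hp : ((i : ℕ) + 1) % 2 = 1
        · rw [hrow_odd v i hle hp]; linear_combination 2 * h1 - h2
        · rw [hrow_even v i hle (by omega)]
      · have : (i : ℕ) = n - 1 ∨ (i : ℕ) = n := by omega
        rcases this with hv1 | hv2
        · rw [show i = idx1 n from Fin.ext (by rw [idx1_val]; omega), hrow1 v]
          linear_combination h1 + (((n : ℚ) - 1) / 2) * h2
        · rw [show i = idx2 n from Fin.ext (by rw [idx2_val]; omega), hrow2 v]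
          linear_combination h1 - (((n : ℚ) + 1) / 2) * h2
  -- kernel = kernel of Lmap
  have hkerL : LinearMap.ker M.mulVecLin = LinearMap.ker (Lmap n) := by
    ext v
    rw [LinearMap.mem_ker, LinearMap.mem_ker, Matrix.mulVecLin_apply, hchar v, Lmap_apply,
      Prod.mk_eq_zero, sub_eq_zero]
  constructor
  · -- kernel = span
    apply le_antisymm
    · -- ker ≤ span
      intro v hv
      rw [LinearMap.mem_ker, Matrix.mulVecLin_apply, hchar v] at hv
      obtain ⟨h1, h2⟩ := hv
      have hA'sum : ∑ k ∈ genSetA n, v k = Sfun n v - v 0 := by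
        rw [Sfun, oddSet_eq n hn hn2, Finset.sum_insert (zero_not_mem_genSetA n)]
        ring
      have hdecomp : v = (∑ k ∈ genSetA n, v k • (stdVec n ((k : ℕ) + 1) - stdVec n 1))
          + (∑ k ∈ genSetB n, v k • stdVec n ((k : ℕ) + 1))
          + v (idx1 n) • (stdVec n n + stdVec n (n + 1) - stdVec n 1) := by
        funext i
        have hi := i.isLt
        simp only [Pi.add_apply, Pi.sub_apply, Pi.smul_apply, Finset.sum_apply, smul_eq_mul]
        have hsplit : (∑ k ∈ genSetA n, v k * (stdVec n ((k : ℕ) + 1) i - stdVec n 1 i))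
            = (∑ k ∈ genSetA n, v k * stdVec n ((k : ℕ) + 1) i)
              - (∑ k ∈ genSetA n, v k) * stdVec n 1 i := by
          rw [Finset.sum_mul, ← Finset.sum_sub_distrib]
          exact Finset.sum_congr rfl fun k _ => by ring
        rw [hsplit, sum_stdVec, sum_stdVec]
        by_cases h0 : (i : ℕ) = 0
        · have hA : i ∉ genSetA n := by rw [mem_genSetA]; omega
          have hB : i ∉ genSetB n := by rw [mem_genSetB]; omega
          rw [if_neg hA, if_neg hB, hA'sum]
          simp only [stdVec_apply]
          rw [if_pos (by omega : (i : ℕ) + 1 = 1), if_neg (by omega : ¬((i : ℕ) + 1 = n)),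
            if_neg (by omega : ¬((i : ℕ) + 1 = n + 1))]
          rw [show i = (0 : Fin (n + 1)) from Fin.ext (by simpa using h0)]
          linarith [h1]
        · by_cases hle : (i : ℕ) + 1 ≤ n - 1
          · by_cases hp : ((i : ℕ) + 1) % 2 = 1
            · have hA : i ∈ genSetA n := by rw [mem_genSetA]; omega
              have hB : i ∉ genSetB n := by rw [mem_genSetB]; omega
              rw [if_pos hA, if_neg hB]
              simp only [stdVec_apply]
              rw [if_neg (by omega : ¬((i : ℕ) + 1 = 1)),
                if_neg (by omega : ¬((i : ℕ) + 1 = n)),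
                if_neg (by omega : ¬((i : ℕ) + 1 = n + 1))]
              ring
            · have hA : i ∉ genSetA n := by rw [mem_genSetA]; omega
              have hB : i ∈ genSetB n := by rw [mem_genSetB]; omega
              rw [if_neg hA, if_pos hB]
              simp only [stdVec_apply]
              rw [if_neg (by omega : ¬((i : ℕ) + 1 = 1)),
                if_neg (by omega : ¬((i : ℕ) + 1 = n)),
                if_neg (by omega : ¬((i : ℕ) + 1 = n + 1))]
              ring
          · have hcase : (i : ℕ) = n - 1 ∨ (i : ℕ) = n := by omega
            have hA : i ∉ genSetA n := by rw [mem_genSetA]; omega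
            have hB : i ∉ genSetB n := by rw [mem_genSetB]; omega
            rw [if_neg hA, if_neg hB]
            simp only [stdVec_apply]
            rcases hcase with hv1 | hv2
            · rw [if_neg (by omega : ¬((i : ℕ) + 1 = 1)),
                if_pos (by omega : (i : ℕ) + 1 = n),
                if_neg (by omega : ¬((i : ℕ) + 1 = n + 1))]
              rw [show i = idx1 n from Fin.ext (by rw [idx1_val]; omega)]
              ring
            · rw [if_neg (by omega : ¬((i : ℕ) + 1 = 1)),
                if_neg (by omega : ¬((i : ℕ) + 1 = n)),
                if_pos (by omega : (i : ℕ) + 1 = n + 1)]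
              rw [show i = idx2 n from Fin.ext (by rw [idx2_val]; omega)]
              linarith [h2]
      rw [hdecomp]
      refine Submodule.add_mem _ (Submodule.add_mem _ ?_ ?_) ?_
      · refine Submodule.sum_mem _ fun k hk => Submodule.smul_mem _ _ (Submodule.subset_span ?_)
        rw [mem_genSetA] at hk
        exact Set.mem_union_left _ (Set.mem_union_left _
          ⟨(k : ℕ) + 1, Nat.odd_iff.mpr hk.1, hk.2.1, hk.2.2, rfl⟩)
      · refine Submodule.sum_mem _ fun k hk => Submodule.smul_mem _ _ (Submodule.subset_span ?_)
        rw [mem_genSetB] at hk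
        exact Set.mem_union_left _ (Set.mem_union_right _
          ⟨(k : ℕ) + 1, Nat.even_iff.mpr hk.1, by omega, hk.2, rfl⟩)
      · exact Submodule.smul_mem _ _ (Submodule.subset_span (Set.mem_union_right _ rfl))
    · -- span ≤ ker
      rw [Submodule.span_le]
      rintro g hg
      simp only [Set.mem_union, Set.mem_setOf_eq, Set.mem_singleton_iff] at hg
      rw [SetLike.mem_coe, LinearMap.mem_ker, Matrix.mulVecLin_apply, hchar]
      rcases hg with (⟨j, hj1, hj2, hj3, rfl⟩ | ⟨j, hj1, hj2, hj3, rfl⟩) | rfl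
      · have hjo : j % 2 = 1 := Nat.odd_iff.mp hj1
        have hS : Sfun n (stdVec n j - stdVec n 1) = 0 := by
          rw [Sfun_sub, Sfun_stdVec n j (by omega) (by omega),
            Sfun_stdVec n 1 (by omega) (by omega),
            if_pos ⟨hjo, by omega⟩, if_pos ⟨by norm_num, by omega⟩]
          ring
        constructor
        · rw [Pi.sub_apply, hS]
          simp only [stdVec_apply, idx1_val]
          split_ifs <;> (first | ring1 | (exfalso; omega))
        · simp only [Pi.sub_apply, stdVec_apply, idx1_val, idx2_val]
          split_ifs <;> (first | ring1 | (exfalso; omega))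
      · have hje : j % 2 = 0 := Nat.even_iff.mp hj1
        have hS : Sfun n (stdVec n j) = 0 := by
          rw [Sfun_stdVec n j (by omega) (by omega), if_neg (by omega)]
        constructor
        · rw [hS]
          simp only [stdVec_apply, idx1_val]
          split_ifs <;> (first | ring1 | (exfalso; omega))
        · simp only [stdVec_apply, idx1_val, idx2_val]
          split_ifs <;> (first | ring1 | (exfalso; omega))
      · have hS : Sfun n (stdVec n n + stdVec n (n + 1) - stdVec n 1) = -1 := by
          rw [Sfun_sub, Sfun_add, Sfun_stdVec n n (by omega) (by omega),
            Sfun_stdVec n (n + 1) (by omega) (by omega),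
            Sfun_stdVec n 1 (by omega) (by omega),
            if_neg (by omega), if_neg (by omega), if_pos ⟨by norm_num, by omega⟩]
          ring
        constructor
        · rw [Pi.sub_apply, Pi.add_apply, hS]
          simp only [stdVec_apply, idx1_val]
          split_ifs <;> (first | ring1 | (exfalso; omega))
        · simp only [Pi.sub_apply, Pi.add_apply, stdVec_apply, idx1_val, idx2_val]
          split_ifs <;> (first | ring1 | (exfalso; omega))
  · -- finrank
    rw [hkerL]
    have hsurj : Function.Surjective (Lmap n) := by
      rintro ⟨p, q⟩
      refine ⟨p • stdVec n n + (p - q) • stdVec n (n + 1), ?_⟩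
      rw [map_add, map_smul, map_smul]
      have e1 : Lmap n (stdVec n n) = (1, 1) := by
        rw [Lmap_apply, Sfun_stdVec n n (by omega) (by omega), if_neg (by omega)]
        simp only [stdVec_apply, idx1_val, idx2_val]
        rw [if_pos (by omega : n - 1 + 1 = n), if_neg (by omega : ¬(n + 1 = n))]
        norm_num
      have e2 : Lmap n (stdVec n (n + 1)) = (0, -1) := by
        rw [Lmap_apply, Sfun_stdVec n (n + 1) (by omega) (by omega), if_neg (by omega)]
        simp only [stdVec_apply, idx1_val, idx2_val]
        rw [if_neg (by omega : ¬(n - 1 + 1 = n + 1))]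
        norm_num
      rw [e1, e2]
      simp only [Prod.smul_mk, Prod.mk_add_mk, Prod.mk.injEq, smul_eq_mul]
      constructor <;> ring
    have hrk := LinearMap.finrank_range_add_finrank_ker (Lmap n)
    rw [LinearMap.range_eq_top.mpr hsurj, finrank_top, Module.finrank_fin_fun] at hrk
    have hp2 : Module.finrank ℚ (ℚ × ℚ) = 2 := by
      rw [Module.finrank_prod, Module.finrank_self]
    rw [hp2] at hrk
    omega
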